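/- There exists a countable and proper integral ultrametric space PU such that every proper metric space X of asymptotic dimension 0 coarsely embeds into PU. -/

import Mathlib

/-- The distance of a metric space is an ultrametric. -/
def IsUltra (X : Type*) [MetricSpace X] : Prop :=
  ∀ x y z : X, dist x z ≤ max (dist x y) (dist y z)

/-- All distances of the metric space are non-negative integers. -/
def IsIntegralDist (X : Type*) [MetricSpace X] : Prop :=
  ∀ x y : X, ∃ n : ℕ, dist x y = n

/-- A metric space has asymptotic dimension `0` if for every `r > 0` the `r`-components of
the space (classes of the chain relation generated by `dist a b < r`) are uniformly
bounded. -/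
def AsdimZero (X : Type*) [MetricSpace X] : Prop :=
  ∀ r : ℝ, r > 0 → ∃ B : ℝ, B > 0 ∧ ∀ x y : X,
    Relation.ReflTransGen (fun a b : X => dist a b < r) x y → dist x y ≤ B

/-- `f` is a coarse embedding: uniformly bornologous and uniformly proper. -/
def CoarseEmbedding {X Y : Type*} [MetricSpace X] [MetricSpace Y] (f : X → Y) : Prop :=
  (∀ R : ℝ, R > 0 → ∃ S' : ℝ, S' > 0 ∧ ∀ x y : X, dist x y ≤ R → dist (f x) (f y) ≤ S') ∧
  (∀ R : ℝ, R > 0 → ∃ S' : ℝ, S' > 0 ∧ ∀ x y : X, dist (f x) (f y) ≤ R → dist x y ≤ S')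

open Finset

/-- max-mismatch finset of two finsupps -/
noncomputable def mism (a b : ℕ →₀ ℕ) : Finset ℕ :=
  (a.support ∪ b.support).filter (fun n => a n ≠ b n)

lemma mem_mism {a b : ℕ →₀ ℕ} {n : ℕ} : n ∈ mism a b ↔ a n ≠ b n := by
  classical
  constructor
  · intro h; exact (Finset.mem_filter.1 h).2
  · intro h
    refine Finset.mem_filter.2 ⟨?_, h⟩
    rcases eq_or_ne (a n) 0 with h0 | h0
    · refine Finset.mem_union.2 (Or.inr (Finsupp.mem_support_iff.2 (fun hb => h ?_)))
      rw [h0, hb]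
    · exact Finset.mem_union.2 (Or.inl (Finsupp.mem_support_iff.2 h0))

lemma mism_comm (a b : ℕ →₀ ℕ) : mism a b = mism b a := by
  ext n; simp [mem_mism, ne_comm]

/-- natural-valued distance: (max mismatch)+1, or 0 -/
noncomputable def pd (a b : ℕ →₀ ℕ) : ℕ := (mism a b).sup (fun n => n + 1)

lemma pd_self (a : ℕ →₀ ℕ) : pd a a = 0 := by
  have : mism a a = ∅ := by ext n; simp [mem_mism]
  simp [pd, this]

lemma pd_comm (a b : ℕ →₀ ℕ) : pd a b = pd b a := by rw [pd, pd, mism_comm]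

lemma pd_eq_zero {a b : ℕ →₀ ℕ} (h : pd a b = 0) : a = b := by
  ext n
  by_contra hn
  have : n + 1 ≤ pd a b := Finset.le_sup (f := fun n => n + 1) (mem_mism.2 hn)
  omega

lemma le_pd {a b : ℕ →₀ ℕ} {n : ℕ} (h : a n ≠ b n) : n + 1 ≤ pd a b :=
  Finset.le_sup (f := fun n => n + 1) (mem_mism.2 h)

lemma pd_le {a b : ℕ →₀ ℕ} {N : ℕ} (h : ∀ n, a n ≠ b n → n + 1 ≤ N) : pd a b ≤ N :=
  Finset.sup_le (fun n hn => h n (mem_mism.1 hn))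

lemma pd_ultra (a b c : ℕ →₀ ℕ) : pd a c ≤ max (pd a b) (pd b c) := by
  refine pd_le (fun n hn => ?_)
  rcases eq_or_ne (a n) (b n) with h | h
  · exact le_max_of_le_right (le_pd (by rw [← h]; exact hn))
  · exact le_max_of_le_left (le_pd h)

/-- The universal space: finitely supported sequences whose values are bounded by the
largest support position. -/
def PUSpace : Type := {a : ℕ →₀ ℕ // ∀ n, a n ≤ a.support.sup id}

noncomputable instance : MetricSpace PUSpace where
  dist a b := (pd a.1 b.1 : ℝ)
  dist_self a := by simp [pd_self]
  dist_comm a b := by simp [pd_comm a.1 b.1]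
  dist_triangle a b c := by
    have h := pd_ultra a.1 b.1 c.1
    have h2 : pd a.1 c.1 ≤ pd a.1 b.1 + pd b.1 c.1 := h.trans (max_le (Nat.le_add_right _ _) (Nat.le_add_left _ _))
    show (pd a.1 c.1 : ℝ) ≤ (pd a.1 b.1 : ℝ) + (pd b.1 c.1 : ℝ)
    exact_mod_cast h2
  eq_of_dist_eq_zero := by
    intro a b h
    have h2 : (pd a.1 b.1 : ℝ) = 0 := h
    exact Subtype.ext (pd_eq_zero (by exact_mod_cast h2))

lemma PUSpace.dist_def (a b : PUSpace) : dist a b = (pd a.1 b.1 : ℝ) := rfl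

instance : Countable PUSpace := Subtype.countable

lemma pu_ultra : ∀ x y z : PUSpace, dist x z ≤ max (dist x y) (dist y z) := by
  intro x y z
  rw [PUSpace.dist_def, PUSpace.dist_def, PUSpace.dist_def, ← Nat.cast_max]
  exact_mod_cast pd_ultra x.1 y.1 z.1

lemma pu_mem_ball_bound {a b : PUSpace} {r : ℝ} (hb : b ∈ Metric.closedBall a r)
    {n : ℕ} (hn : ⌈r⌉₊ ≤ n) : b.1 n = a.1 n := by
  by_contra h
  have h1 : n + 1 ≤ pd a.1 b.1 := le_pd (fun he => h he.symm)
  have h2 : (pd a.1 b.1 : ℝ) ≤ r := by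
    rw [Metric.mem_closedBall, dist_comm] at hb; exact hb
  have h3 : pd a.1 b.1 ≤ ⌈r⌉₊ := by
    have := h2.trans (Nat.le_ceil r)
    exact_mod_cast this
  omega

lemma pu_ball_finite (a : PUSpace) (r : ℝ) : (Metric.closedBall a r).Finite := by
  classical
  set m : ℕ := ⌈r⌉₊ with hm
  set K : ℕ := max (a.1.support.sup id) m with hK
  have hsup : ∀ b : PUSpace, b ∈ Metric.closedBall a r → b.1.support.sup id ≤ K := by
    intro b hb
    refine Finset.sup_le (fun j hj => ?_)
    rcases lt_or_ge j m with h | h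
    · exact le_max_of_le_right (le_of_lt h)
    · have : b.1 j = a.1 j := pu_mem_ball_bound hb h
      have hj' : j ∈ a.1.support := Finsupp.mem_support_iff.2 (by
        rw [← this]; exact Finsupp.mem_support_iff.1 hj)
      exact le_max_of_le_left (Finset.le_sup (f := id) hj')
  have hval : ∀ b : PUSpace, b ∈ Metric.closedBall a r → ∀ n, b.1 n ≤ K :=
    fun b hb n => (b.2 n).trans (hsup b hb)
  apply Set.Finite.of_finite_image (f := fun b : PUSpace => fun i : Fin m => (⟨(b.1 i) % (K + 1), Nat.mod_lt _ (Nat.succ_pos K)⟩ : Fin (K+1)))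
  · exact Set.toFinite _
  · intro b hb c hc he
    have hbc : b.1 = c.1 := by
      ext n
      rcases lt_or_ge n m with h | h
      · have h2 := congrArg (fun z => (z : ℕ)) (Fin.mk.injEq _ _ _ _ ▸ congrFun he ⟨n, h⟩)
        have h3 : (b.1 n) % (K+1) = (c.1 n) % (K+1) := Fin.mk.inj_iff.1 (congrFun he ⟨n, h⟩)
        rwa [Nat.mod_eq_of_lt (Nat.lt_succ_of_le (hval b hb n)),
          Nat.mod_eq_of_lt (Nat.lt_succ_of_le (hval c hc n))] at h3
      · rw [pu_mem_ball_bound hb h, pu_mem_ball_bound hc h]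
    exact Subtype.ext hbc

instance : ProperSpace PUSpace :=
  ⟨fun x r => (pu_ball_finite x r).isCompact⟩

section Embed
variable {X : Type*} [MetricSpace X]

/-- chain relation at scale `n` -/
def En (n : ℕ) (x y : X) : Prop :=
  Relation.ReflTransGen (fun a b : X => dist a b < (n:ℝ)) x y

lemma En.symm {n : ℕ} {x y : X} (h : En n x y) : En n y x :=
  (@Relation.ReflTransGen.symmetric _ _ ⟨fun _ _ hd => by rwa [dist_comm] at hd⟩).symm _ _ h

lemma En.trans {n : ℕ} {x y z : X} (h : En n x y) (h' : En n y z) : En n x z :=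
  Relation.ReflTransGen.trans h h'

lemma En.mono {n n' : ℕ} (hn : n ≤ n') {x y : X} (h : En n x y) : En n' x y :=
  Relation.ReflTransGen.mono (fun a b hd => lt_of_lt_of_le hd (by exact_mod_cast hn)) x y h

lemma En.single {n : ℕ} {x y : X} (h : dist x y < (n:ℝ)) : En n x y :=
  Relation.ReflTransGen.single h

lemma En_refl (n : ℕ) (x : X) : En n x x := Relation.ReflTransGen.refl

lemma en_exists (x0 x : X) : ∃ m : ℕ, En (m+1) x0 x := by
  refine ⟨⌊dist x0 x⌋₊, En.single ?_⟩
  have := Nat.lt_floor_add_one (dist x0 x)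
  exact_mod_cast this

/-- level of merging with the basepoint -/
noncomputable def Dd (x0 : X) (x : X) : ℕ := sInf {m | En (m+1) x0 x}

lemma Dd_spec (x0 : X) (x : X) : En (Dd x0 x + 1) x0 x := Nat.sInf_mem (en_exists x0 x)

lemma Dd_le {x0 : X} {x : X} {m : ℕ} (h : En (m+1) x0 x) : Dd x0 x ≤ m := Nat.sInf_le h

lemma En_of_Dd_lt {x0 : X} {x : X} {m : ℕ} (h : Dd x0 x < m) : En m x0 x :=
  (Dd_spec x0 x).mono (by omega)

/-- index of the `m`-class of `x` via the dense sequence -/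
noncomputable def idx (s : ℕ → X) (m : ℕ) (x : X) : ℕ := sInf {i | En m x (s i)}

lemma idx_congr (s : ℕ → X) {m : ℕ} {x y : X} (h : En m x y) : idx s m x = idx s m y := by
  unfold idx
  congr 1
  ext i
  exact ⟨fun hi => (h.symm).trans hi, fun hi => h.trans hi⟩

lemma idx_inj (s : ℕ → X) (hs : DenseRange s) {m : ℕ} (hm : 1 ≤ m) {x y : X}
    (h : idx s m x = idx s m y) : En m x y := by
  have hne : ∀ z : X, {i | En m z (s i)}.Nonempty := by
    intro z
    obtain ⟨i, hi⟩ := hs.exists_dist_lt z (show (0:ℝ) < (m:ℝ) by exact_mod_cast hm)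
    exact ⟨i, En.single hi⟩
  have h1 : En m x (s (idx s m x)) := Nat.sInf_mem (hne x)
  have h2 : En m y (s (idx s m y)) := Nat.sInf_mem (hne y)
  rw [h] at h1
  exact h1.trans h2.symm

/-- coordinate data: index of the `m`-class of `x` inside its parent, with the
basepoint chain getting `0`. -/
noncomputable def aC (x0 : X) (s : ℕ → X) (m : ℕ) (x : X) : ℕ :=
  haveI := Classical.dec (En m x0 x)
  if 1 ≤ m ∧ ¬ En m x0 x then idx s m x + 1 else 0

lemma aC_congr (x0 : X) (s : ℕ → X) {m : ℕ} {x y : X} (h : En m x y) : aC x0 s m x = aC x0 s m y := by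
  unfold aC
  have hx0 : En m x0 x ↔ En m x0 y := ⟨fun h' => h'.trans h, fun h' => h'.trans h.symm⟩
  by_cases hc : 1 ≤ m ∧ ¬ En m x0 x
  · rw [if_pos hc, if_pos ⟨hc.1, fun hy => hc.2 (hx0.2 hy)⟩, idx_congr s h]
  · rw [if_neg hc, if_neg (fun hc' => hc ⟨hc'.1, fun hx => hc'.2 (hx0.1 hx)⟩)]

lemma aC_inj (x0 : X) (s : ℕ → X) (hs : DenseRange s) {m : ℕ} (hm : 1 ≤ m) {x y : X}
    (h : aC x0 s m x = aC x0 s m y) : En m x y := by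
  unfold aC at h
  by_cases hx : En m x0 x <;> by_cases hy : En m x0 y
  · exact hx.symm.trans hy
  · rw [if_neg (fun hc => hc.2 hx), if_pos ⟨hm, hy⟩] at h; omega
  · rw [if_pos ⟨hm, hx⟩, if_neg (fun hc => hc.2 hy)] at h; omega
  · rw [if_pos ⟨hm, hx⟩, if_pos ⟨hm, hy⟩] at h
    exact idx_inj s hs hm (by omega)

lemma aC_eq_zero_of_big (x0 : X) (s : ℕ → X) {m : ℕ} {x : X} (h : Dd x0 x < m) : aC x0 s m x = 0 := by
  unfold aC
  rw [if_neg (fun hc => hc.2 (En_of_Dd_lt h))]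

end Embed
section Embed2
variable {X : Type*} [MetricSpace X]

lemma Dd_compare {x0 x y : X} {k : ℕ} (hk : 1 ≤ k) (h : En k x y) :
    Dd x0 x = Dd x0 y ∨ (Dd x0 x < k ∧ Dd x0 y < k) := by
  have key : ∀ u v : X, En k u v → k ≤ Dd x0 u → Dd x0 u = Dd x0 v := by
    intro u v huv hku
    have h1 : Dd x0 v ≤ Dd x0 u :=
      Dd_le (((Dd_spec x0 u)).trans (huv.mono (by omega)))
    have h2 : En (max (k-1) (Dd x0 v) + 1) x0 u := by
      have hv : En (max (k-1) (Dd x0 v) + 1) x0 v := (Dd_spec x0 v).mono (by omega)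
      exact hv.trans (huv.symm.mono (by omega))
    have h3 : Dd x0 u ≤ max (k-1) (Dd x0 v) := Dd_le h2
    omega
  by_cases h1 : k ≤ Dd x0 x
  · exact Or.inl (key x y h h1)
  · by_cases h2 : k ≤ Dd x0 y
    · exact Or.inl (key y x h.symm h2).symm
    · exact Or.inr ⟨by omega, by omega⟩

/-- bound on the index data over the ball of scale `D+1` around `x0` -/
noncomputable def gam (x0 : X) (s : ℕ → X) (D : ℕ) : ℕ :=
  sInf {g | ∀ m x, 1 ≤ m → m ≤ D → En (D+1) x0 x → aC x0 s m x ≤ g}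

lemma gam_set_nonempty [ProperSpace X] (ha : AsdimZero X) (x0 : X) (s : ℕ → X) (D : ℕ) :
    {g | ∀ m x, 1 ≤ m → m ≤ D → En (D+1) x0 x → aC x0 s m x ≤ g}.Nonempty := by
  classical
  obtain ⟨B, hB0, hB⟩ := ha ((D+1 : ℕ) : ℝ) (by positivity)
  have hK : IsCompact (Metric.closedBall x0 B) := isCompact_closedBall x0 B
  have hsub : {z : X | En (D+1) x0 z} ⊆ Metric.closedBall x0 B := by
    intro z hz
    rw [Metric.mem_closedBall, dist_comm]
    exact hB x0 z hz
  have key : ∀ m : ℕ, ∃ g, ∀ x, 1 ≤ m → m ≤ D → En (D+1) x0 x → aC x0 s m x ≤ g := by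
    intro m
    by_cases hm : 1 ≤ m
    · have hopen : ∀ y : X, IsOpen {z : X | En m y z} := by
        intro y
        rw [Metric.isOpen_iff]
        intro z hz
        refine ⟨(m : ℝ), by exact_mod_cast hm, fun w hw => ?_⟩
        rw [Metric.mem_ball, dist_comm] at hw
        exact Set.mem_setOf.2 ((Set.mem_setOf.1 hz).trans (En.single hw))
      have hcover : Metric.closedBall x0 B ⊆ ⋃ y : X, {z : X | En m y z} :=
        fun z _ => Set.mem_iUnion.2 ⟨z, En_refl m z⟩
      obtain ⟨t, ht⟩ := hK.elim_finite_subcover (fun y : X => {z : X | En m y z})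
        (fun y => hopen y) hcover
      refine ⟨t.sup (fun y => aC x0 s m y), fun x hm1 hmD hx => ?_⟩
      have hxK := ht (hsub hx)
      simp only [Set.mem_iUnion] at hxK
      obtain ⟨y, hyt, hy⟩ := hxK
      rw [← aC_congr x0 s (show En m y x from hy)]
      exact Finset.le_sup hyt
    · exact ⟨0, fun x h1 => absurd h1 hm⟩
  choose g hg using key
  exact ⟨(Finset.Icc 1 D).sup g, fun m x hm1 hmD hx =>
    (hg m x hm1 hmD hx).trans (Finset.le_sup (Finset.mem_Icc.2 ⟨hm1, hmD⟩))⟩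

lemma gam_spec [ProperSpace X] (ha : AsdimZero X) (x0 : X) (s : ℕ → X) {D m : ℕ} {x : X}
    (hm : 1 ≤ m) (hmD : m ≤ D) (hx : En (D+1) x0 x) : aC x0 s m x ≤ gam x0 s D :=
  (Nat.sInf_mem (gam_set_nonempty ha x0 s D)) m x hm hmD hx

/-- monotone version -/
noncomputable def gamm (x0 : X) (s : ℕ → X) (D : ℕ) : ℕ :=
  (Finset.range (D+1)).sup (gam x0 s)

lemma gam_le_gamm (x0 : X) (s : ℕ → X) (D : ℕ) : gam x0 s D ≤ gamm x0 s D :=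
  Finset.le_sup (Finset.self_mem_range_succ D)

lemma gamm_mono (x0 : X) (s : ℕ → X) {D D' : ℕ} (h : D ≤ D') :
    gamm x0 s D ≤ gamm x0 s D' :=
  Finset.sup_mono (Finset.range_subset_range.2 (by omega))

/-- padding coordinate -/
noncomputable def Tpad (x0 : X) (s : ℕ → X) (x : X) : ℕ :=
  2 * max (2 * Dd x0 x + 1) (gamm x0 s (Dd x0 x)) + 1

lemma Tpad_odd (x0 : X) (s : ℕ → X) (x : X) : ¬ (2 ∣ Tpad x0 s x) := by
  unfold Tpad; omega

lemma Tpad_big (x0 : X) (s : ℕ → X) (x : X) :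
    2 * Dd x0 x < Tpad x0 s x ∧ 3 ≤ Tpad x0 s x ∧ gamm x0 s (Dd x0 x) ≤ Tpad x0 s x := by
  unfold Tpad
  have h1 := le_max_left (2 * Dd x0 x + 1) (gamm x0 s (Dd x0 x))
  have h2 := le_max_right (2 * Dd x0 x + 1) (gamm x0 s (Dd x0 x))
  omega

lemma Tpad_congr (x0 : X) (s : ℕ → X) {x y : X} (h : Dd x0 x = Dd x0 y) :
    Tpad x0 s x = Tpad x0 s y := by unfold Tpad; rw [h]

/-- coordinate function of the embedding -/
noncomputable def fFun (x0 : X) (s : ℕ → X) (x : X) : ℕ → ℕ := fun n =>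
  haveI := Classical.dec (n = Tpad x0 s x)
  haveI := Classical.dec (2 ∣ n)
  if n = Tpad x0 s x then 1 else if 2 ∣ n then aC x0 s (n/2) x else 0

lemma fFun_ne_zero_le (x0 : X) (s : ℕ → X) (x : X) {n : ℕ} (h : fFun x0 s x n ≠ 0) :
    n ≤ Tpad x0 s x := by
  unfold fFun at h
  split_ifs at h with h1 h2
  · omega
  · have h3 : ¬ (Dd x0 x < n / 2) := fun hc => h (aC_eq_zero_of_big x0 s hc)
    have := (Tpad_big x0 s x).1
    omega
  · omega

lemma fFun_supp_finite (x0 : X) (s : ℕ → X) (x : X) :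
    (Function.support (fFun x0 s x)).Finite := by
  apply Set.Finite.subset (Set.finite_Icc 0 (Tpad x0 s x))
  intro n hn
  exact Set.mem_Icc.2 ⟨Nat.zero_le n, fFun_ne_zero_le x0 s x hn⟩

lemma fFun_le [ProperSpace X] (ha : AsdimZero X) (x0 : X) (s : ℕ → X) (x : X) (n : ℕ) :
    fFun x0 s x n ≤ Tpad x0 s x := by
  unfold fFun
  obtain ⟨hb1, hb2, hb3⟩ := Tpad_big x0 s x
  split_ifs with h1 h2
  · omega
  · rcases Nat.eq_zero_or_pos (aC x0 s (n/2) x) with h0 | h0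
    · omega
    · have hm : 1 ≤ n / 2 ∧ ¬ En (n/2) x0 x := by
        by_contra hc
        have : aC x0 s (n/2) x = 0 := by
          unfold aC
          rw [if_neg hc]
        omega
      have hD : n / 2 ≤ Dd x0 x := by
        by_contra hc
        rw [aC_eq_zero_of_big x0 s (by omega)] at h0; omega
      have := gam_spec ha x0 s hm.1 hD (Dd_spec x0 x)
      have := gam_le_gamm x0 s (Dd x0 x)
      omega
  · omega

/-- the embedding into `PUSpace` -/
noncomputable def fEmb [ProperSpace X] (ha : AsdimZero X) (x0 : X) (s : ℕ → X) (x : X) :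
    PUSpace := by
  refine ⟨Finsupp.ofSupportFinite (fFun x0 s x) (fFun_supp_finite x0 s x), ?_⟩
  have hcoe : ∀ n, (Finsupp.ofSupportFinite (fFun x0 s x) (fFun_supp_finite x0 s x)) n
      = fFun x0 s x n := fun n => congrFun Finsupp.ofSupportFinite_coe n
  intro n
  rw [hcoe]
  have hmem : Tpad x0 s x ∈ (Finsupp.ofSupportFinite (fFun x0 s x)
      (fFun_supp_finite x0 s x)).support := by
    rw [Finsupp.mem_support_iff, hcoe]
    unfold fFun
    rw [if_pos rfl]
    omega
  exact (fFun_le ha x0 s x n).trans (Finset.le_sup (f := id) hmem)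

lemma fEmb_coe [ProperSpace X] (ha : AsdimZero X) (x0 : X) (s : ℕ → X) (x : X) (n : ℕ) :
    (fEmb ha x0 s x).1 n = fFun x0 s x n := congrFun Finsupp.ofSupportFinite_coe n

end Embed2
section Embed3
variable {X : Type*} [MetricSpace X]

lemma pd_lower [ProperSpace X] (ha : AsdimZero X) (x0 : X) (s : ℕ → X) (hs : DenseRange s)
    {k : ℕ} (hk : 1 ≤ k) {x y : X} (h : ¬ En k x y) :
    2 * k + 1 ≤ pd (fEmb ha x0 s x).1 (fEmb ha x0 s y).1 := by
  have hx : ∀ z : X, fFun x0 s z (2*k) = aC x0 s k z := by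
    intro z
    unfold fFun
    rw [if_neg (fun hc => Tpad_odd x0 s z (by rw [← hc]; exact ⟨k, rfl⟩))]
    rw [if_pos ⟨k, rfl⟩]
    congr 1
    omega
  refine le_pd (n := 2*k) ?_
  rw [fEmb_coe, fEmb_coe, hx x, hx y]
  exact fun hc => h (aC_inj x0 s hs hk hc)

lemma pd_upper [ProperSpace X] (ha : AsdimZero X) (x0 : X) (s : ℕ → X)
    {k : ℕ} (hk : 1 ≤ k) {x y : X} (h : En k x y) :
    pd (fEmb ha x0 s x).1 (fEmb ha x0 s y).1 ≤ 2 * max (2*k+1) (gamm x0 s k) + 2 := by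
  set β := 2 * max (2*k+1) (gamm x0 s k) + 1 with hβ
  have hup : ∀ z : X, Dd x0 z < k → Tpad x0 s z ≤ β := by
    intro z hz
    have h1 : 2 * Dd x0 z + 1 ≤ 2*k+1 := by omega
    have h2 : gamm x0 s (Dd x0 z) ≤ gamm x0 s k := gamm_mono x0 s (by omega)
    unfold Tpad
    have := max_le_max h1 h2
    omega
  refine pd_le (fun n hn => ?_)
  rw [fEmb_coe, fEmb_coe] at hn
  suffices hsuf : n ≤ β by omega
  rcases Dd_compare (x0 := x0) hk h with hD | ⟨hDx, hDy⟩
  · -- equal depths: mismatch must be a data coordinate below 2k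
    have hT : Tpad x0 s x = Tpad x0 s y := Tpad_congr x0 s hD
    unfold fFun at hn
    by_cases h1 : n = Tpad x0 s x
    · rw [if_pos h1] at hn
      rw [if_pos (h1.trans hT)] at hn
      omega
    · rw [if_neg h1] at hn
      rw [if_neg (show ¬ (n = Tpad x0 s y) from fun hc => h1 (hc.trans hT.symm))] at hn
      by_cases h2 : 2 ∣ n
      · rw [if_pos h2] at hn
        rw [if_pos h2] at hn
        have h3 : ¬ En (n/2) x y := fun hc => hn (aC_congr x0 s hc)
        have h4 : n / 2 < k := by
          by_contra hc
          exact h3 (h.mono (by omega))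
        have h5 : 2 * (n/2) = n := by omega
        omega
      · rw [if_neg h2] at hn
        rw [if_neg h2] at hn
        omega
  · -- both depths small: all coordinates are below the padding bounds
    rcases eq_or_ne (fFun x0 s x n) 0 with h1 | h1
    · have h2 : fFun x0 s y n ≠ 0 := fun hc => hn (by rw [h1, hc])
      exact (fFun_ne_zero_le x0 s y h2).trans (hup y hDy)
    · exact (fFun_ne_zero_le x0 s x h1).trans (hup x hDx)

end Embed3

/-- Theorem 5.2: there is a countable and proper integral ultrametric space `PU` such that
every proper metric space of asymptotic dimension `0` coarsely embeds into `PU`. -/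
theorem exists_universal_proper_asdim_zero :
    ∃ (PU : Type) (_ : MetricSpace PU), Countable PU ∧ ProperSpace PU ∧ IsUltra PU ∧
      IsIntegralDist PU ∧
      ∀ (X : Type u) (_ : MetricSpace X), ProperSpace X →
        AsdimZero X → ∃ f : X → PU, CoarseEmbedding f := by
  classical
  refine ⟨PUSpace, inferInstance, inferInstance, inferInstance, pu_ultra,
    fun x y => ⟨pd x.1 y.1, rfl⟩, ?_⟩
  intro X _ hprop ha
  haveI := hprop
  rcases isEmpty_or_nonempty X with hemp | hne
  · refine ⟨fun x => (hemp.false x).elim, ⟨fun R hR => ⟨1, one_pos, fun x => (hemp.false x).elim⟩,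
      fun R hR => ⟨1, one_pos, fun x => (hemp.false x).elim⟩⟩⟩
  · obtain ⟨x0⟩ := hne
    haveI : Nonempty X := ⟨x0⟩
    set s : ℕ → X := TopologicalSpace.denseSeq X with hsdef
    have hs : DenseRange s := TopologicalSpace.denseRange_denseSeq X
    refine ⟨fun x => fEmb ha x0 s x, ?_, ?_⟩
    · -- uniformly bornologous
      intro R hR
      set k : ℕ := ⌊R⌋₊ + 1 with hkdef
      refine ⟨(2 * max (2*k+1) (gamm x0 s k) + 2 : ℕ), by positivity, fun x y hxy => ?_⟩
      have hE : En k x y := En.single (by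
        have h1 : R < (k : ℝ) := by
          rw [hkdef]
          push_cast
          exact Nat.lt_floor_add_one R
        exact lt_of_le_of_lt hxy h1)
      have := pd_upper ha x0 s (by omega) hE
      rw [PUSpace.dist_def]
      exact_mod_cast this
    · -- uniformly proper
      intro R hR
      set k : ℕ := ⌊R⌋₊ + 1 with hkdef
      obtain ⟨B, hB0, hB⟩ := ha ((k : ℕ) : ℝ) (by positivity)
      refine ⟨max B 1, lt_of_lt_of_le one_pos (le_max_right _ _), fun x y hxy => ?_⟩
      have hE : En k x y := by
        by_contra hc
        have h1 := pd_lower ha x0 s hs (by omega) hc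
        rw [PUSpace.dist_def] at hxy
        have h2 : ((2*k+1 : ℕ) : ℝ) ≤ R := le_trans (by exact_mod_cast Nat.cast_le.2 h1) hxy
        have h3 : R < (k:ℝ) := by
          rw [hkdef]; push_cast; exact Nat.lt_floor_add_one R
        have h4 : (k:ℝ) ≤ ((2*k+1 : ℕ) : ℝ) := by push_cast; linarith [Nat.cast_nonneg (α := ℝ) k]
        linarith
      exact le_trans (hB x y hE) (le_max_left _ _)
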